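/- Block decoupling of symmetrizers: suppose a first order in time, second order in space system has principal part matrix A^p of the block form [[0, A₁₂, A₁₃, 0],[A₂₁, 0, 0, A₂₄],[A₃₁, 0, 0, A₃₄],[0, A₄₂, A₄₃, 0]] (pairs coupled only through off-diagonal blocks as indicated). If H̃ is a Hermitian positive definite symmetrizer of A^p, then the matrix H obtained from H̃ by keeping only the blocks H₁₁, H₁₄, H₂₂, H₂₃, H₃₃, H₄₄ (and their conjugates) and setting the other blocks to zero is also a Hermitian positive definite symmetrizer of A^p. -/

import Mathlib

open Matrix
open scoped ComplexOrder

/-- Block decoupling of symmetrizers.  If the principal part matrices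
`A^p` have the block structure
`[[0, A₁₂, A₁₃, 0],[A₂₁, 0, 0, A₂₄],[A₃₁, 0, 0, A₃₄],[0, A₄₂, A₄₃, 0]]`
and `H̃` (with blocks `H̃ₐᵦ`) is a Hermitian positive definite symmetrizer of the
family `A^p` (i.e. `H̃` is positive definite and every contraction
`Σ_p s_p H̃ A^p` is Hermitian), then the matrix `H` obtained from `H̃` by keeping
only the blocks `H₁₁, H₁₄, H₂₂, H₂₃, H₃₃, H₄₄` (and their conjugates) and setting the
remaining blocks to zero is also a Hermitian positive definite symmetrizer of `A^p`. -/
theorem stmt19 {ι n1 n2 n3 n4 : Type*} [Fintype ι]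
    [Fintype n1] [DecidableEq n1] [Fintype n2] [DecidableEq n2]
    [Fintype n3] [DecidableEq n3] [Fintype n4] [DecidableEq n4]
    (A12 : ι → Matrix n1 n2 ℂ) (A13 : ι → Matrix n1 n3 ℂ)
    (A21 : ι → Matrix n2 n1 ℂ) (A24 : ι → Matrix n2 n4 ℂ)
    (A31 : ι → Matrix n3 n1 ℂ) (A34 : ι → Matrix n3 n4 ℂ)
    (A42 : ι → Matrix n4 n2 ℂ) (A43 : ι → Matrix n4 n3 ℂ)
    (A : ι → Matrix ((n1 ⊕ n2) ⊕ (n3 ⊕ n4)) ((n1 ⊕ n2) ⊕ (n3 ⊕ n4)) ℂ)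
    (hA : ∀ p, A p = Matrix.fromBlocks
      (Matrix.fromBlocks 0 (A12 p) (A21 p) 0)
      (Matrix.fromBlocks (A13 p) 0 0 (A24 p))
      (Matrix.fromBlocks (A31 p) 0 0 (A42 p))
      (Matrix.fromBlocks 0 (A34 p) (A43 p) 0))
    (H11 : Matrix n1 n1 ℂ) (H12 : Matrix n1 n2 ℂ) (H13 : Matrix n1 n3 ℂ)
    (H14 : Matrix n1 n4 ℂ) (H22 : Matrix n2 n2 ℂ) (H23 : Matrix n2 n3 ℂ)
    (H24 : Matrix n2 n4 ℂ) (H33 : Matrix n3 n3 ℂ) (H34 : Matrix n3 n4 ℂ)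
    (H44 : Matrix n4 n4 ℂ)
    (Htilde : Matrix ((n1 ⊕ n2) ⊕ (n3 ⊕ n4)) ((n1 ⊕ n2) ⊕ (n3 ⊕ n4)) ℂ)
    (hHtilde : Htilde = Matrix.fromBlocks
      (Matrix.fromBlocks H11 H12 H12ᴴ H22)
      (Matrix.fromBlocks H13 H14 H23 H24)
      (Matrix.fromBlocks H13ᴴ H23ᴴ H14ᴴ H24ᴴ)
      (Matrix.fromBlocks H33 H34 H34ᴴ H44))
    (hpos : Htilde.PosDef)
    (hcand : ∀ s : ι → ℝ, (∑ p, ((s p : ℝ) : ℂ) • (Htilde * A p)).IsHermitian)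
    (H : Matrix ((n1 ⊕ n2) ⊕ (n3 ⊕ n4)) ((n1 ⊕ n2) ⊕ (n3 ⊕ n4)) ℂ)
    (hH : H = Matrix.fromBlocks
      (Matrix.fromBlocks H11 0 0 H22)
      (Matrix.fromBlocks 0 H14 H23 0)
      (Matrix.fromBlocks 0 H23ᴴ H14ᴴ 0)
      (Matrix.fromBlocks H33 0 0 H44)) :
    H.PosDef ∧ ∀ s : ι → ℝ, (∑ p, ((s p : ℝ) : ℂ) • (H * A p)).IsHermitian := by
  classical
  -- the sign matrix D = diag(I, -I, -I, I)
  set D : Matrix ((n1 ⊕ n2) ⊕ (n3 ⊕ n4)) ((n1 ⊕ n2) ⊕ (n3 ⊕ n4)) ℂ :=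
    Matrix.fromBlocks (Matrix.fromBlocks 1 0 0 (-1)) 0 0 (Matrix.fromBlocks (-1) 0 0 1) with hD
  have hDherm : Dᴴ = D := by
    simp [hD, Matrix.fromBlocks_conjTranspose]
  have hDD : D * D = 1 := by
    simp [hD, Matrix.fromBlocks_multiply, Matrix.fromBlocks_one]
  -- D * Htilde * D
  have hDHD : D * Htilde * D = Matrix.fromBlocks
      (Matrix.fromBlocks H11 (-H12) (-H12ᴴ) H22)
      (Matrix.fromBlocks (-H13) H14 H23 (-H24))
      (Matrix.fromBlocks (-H13ᴴ) H23ᴴ H14ᴴ (-H24ᴴ))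
      (Matrix.fromBlocks H33 (-H34) (-H34ᴴ) H44) := by
    rw [hHtilde, hD]
    simp [Matrix.fromBlocks_multiply, Matrix.neg_mul, Matrix.mul_neg]
  -- H = (1/2) • (Htilde + D * Htilde * D)
  have hHhalf : H = (2:ℂ)⁻¹ • (Htilde + D * Htilde * D) := by
    rw [hDHD, hHtilde, hH, Matrix.fromBlocks_add, Matrix.fromBlocks_add,
      Matrix.fromBlocks_add, Matrix.fromBlocks_add, Matrix.fromBlocks_add,
      Matrix.fromBlocks_smul, Matrix.fromBlocks_smul, Matrix.fromBlocks_smul,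
      Matrix.fromBlocks_smul, Matrix.fromBlocks_smul]
    ext i j
    rcases i with (i | i) | (i | i) <;> rcases j with (j | j) | (j | j) <;>
      simp [Matrix.smul_apply, Matrix.add_apply] <;> ring
  -- D anticommutes with every A p
  have hanti : ∀ p, D * A p = -(A p) * D := by
    intro p
    rw [hA, hD]
    simp [Matrix.fromBlocks_multiply, Matrix.fromBlocks_neg,
      Matrix.neg_mul, Matrix.mul_neg]
  have key : ∀ p, (D * Htilde * D) * A p = -(D * (Htilde * A p) * D) := by
    intro p
    calc (D * Htilde * D) * A p = D * Htilde * (D * A p) := by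
          rw [Matrix.mul_assoc]
      _ = D * Htilde * (-(A p) * D) := by rw [hanti]
      _ = -(D * (Htilde * A p) * D) := by
          simp only [Matrix.neg_mul, Matrix.mul_neg, Matrix.mul_assoc]
  -- the conjugated matrix sums
  have hsum2 : ∀ s : ι → ℝ,
      (∑ p, ((s p : ℝ) : ℂ) • ((D * Htilde * D) * A p))
        = -(D * (∑ p, ((s p : ℝ) : ℂ) • (Htilde * A p)) * D) := by
    intro s
    rw [Finset.mul_sum, Finset.sum_mul, ← Finset.sum_neg_distrib]
    refine Finset.sum_congr rfl fun p _ => ?_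
    rw [key, Matrix.mul_smul, Matrix.smul_mul, smul_neg]
  have hherm2 : ∀ s : ι → ℝ,
      (∑ p, ((s p : ℝ) : ℂ) • ((D * Htilde * D) * A p)).IsHermitian := by
    intro s
    rw [hsum2]
    have h1 := hcand s
    rw [Matrix.IsHermitian] at h1 ⊢
    rw [Matrix.conjTranspose_neg, Matrix.conjTranspose_mul, Matrix.conjTranspose_mul,
      hDherm, h1, Matrix.mul_assoc]
  -- (D * Htilde * D) is Hermitian
  have hDHDherm : (D * Htilde * D).IsHermitian := by
    rw [Matrix.IsHermitian, Matrix.conjTranspose_mul, Matrix.conjTranspose_mul,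
      hDherm, hpos.1.eq, Matrix.mul_assoc]
  -- Positive definiteness of H
  have half_pos : (0:ℂ) < (2:ℂ)⁻¹ := by
    rw [show ((2:ℂ)⁻¹) = ((2⁻¹:ℝ):ℂ) by norm_num, Complex.zero_lt_real]
    norm_num
  have hHposdef : H.PosDef := by
    rw [Matrix.posDef_iff_dotProduct_mulVec]
    constructor
    · rw [hHhalf, Matrix.IsHermitian, Matrix.conjTranspose_smul,
        Matrix.conjTranspose_add, hpos.1.eq, hDHDherm.eq]
      congr 1
      simp
    · intro x hx
      have hy : D.mulVec x ≠ 0 := by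
        intro h0
        apply hx
        have : (D * D).mulVec x = D.mulVec (D.mulVec x) := by
          rw [← Matrix.mulVec_mulVec]
        rw [hDD, Matrix.one_mulVec, h0, Matrix.mulVec_zero] at this
        exact this
      have q1 := (Matrix.posDef_iff_dotProduct_mulVec.mp hpos).2 hx
      have q2 := (Matrix.posDef_iff_dotProduct_mulVec.mp hpos).2 hy
      have hq2 : star x ⬝ᵥ (D * Htilde * D).mulVec x
          = star (D.mulVec x) ⬝ᵥ Htilde.mulVec (D.mulVec x) := by
        rw [Matrix.star_mulVec, hDherm, ← Matrix.mulVec_mulVec, ← Matrix.mulVec_mulVec,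
          dotProduct_mulVec, dotProduct_mulVec, Matrix.vecMul_vecMul]
      rw [hHhalf, Matrix.smul_mulVec, dotProduct_smul, Matrix.add_mulVec,
        dotProduct_add, hq2]
      have hsum : (0:ℂ) < star x ⬝ᵥ Htilde.mulVec x
          + star (D.mulVec x) ⬝ᵥ Htilde.mulVec (D.mulVec x) := add_pos q1 q2
      calc (0:ℂ) = (2:ℂ)⁻¹ * 0 := by ring
        _ < _ := by
            rw [smul_eq_mul]
            exact mul_lt_mul_of_pos_left hsum half_pos
  refine ⟨hHposdef, fun s => ?_⟩
  have hsplit : (∑ p, ((s p : ℝ) : ℂ) • (H * A p))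
      = (2:ℂ)⁻¹ • ((∑ p, ((s p : ℝ) : ℂ) • (Htilde * A p))
        + (∑ p, ((s p : ℝ) : ℂ) • ((D * Htilde * D) * A p))) := by
    rw [← Finset.sum_add_distrib, Finset.smul_sum]
    refine Finset.sum_congr rfl fun p _ => ?_
    rw [hHhalf, Matrix.smul_mul, Matrix.add_mul, smul_comm, smul_add]
  rw [hsplit]
  have h1 := hcand s
  have h2 := hherm2 s
  rw [Matrix.IsHermitian] at h1 h2 ⊢
  rw [Matrix.conjTranspose_smul, Matrix.conjTranspose_add, h1, h2]
  congr 1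
  simp
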